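/- For every natural number n and every real number z > 1/4, setting θ = arctan(√(4z−1)) (so θ ∈ (0, π/2)), one has g_n(z) = sin((n+1)θ)/sin θ; in particular, g_{2n}(z) = sin((2n+1)θ)/sin θ, i.e. g_{2n}(z) equals the n-th Dirichlet kernel D_n evaluated at 2θ, where D_n(θ) = sin((n + 1/2)θ)/sin(θ/2). -/

import Mathlib

/-- The G-polynomials: `G 0 z = 1`, `G 1 z = 1`, `G (n+2) z = G (n+1) z - z * G n z`. -/
noncomputable def G : ℕ → ℝ → ℝ
  | 0, _ => 1
  | 1, _ => 1
  | (n + 2), z => G (n + 1) z - z * G n z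

/-- The irrational functions `g n z = G n z / (√z)^n`. -/
noncomputable def g (n : ℕ) (z : ℝ) : ℝ := G n z / (Real.sqrt z) ^ n

/-- The `n`-th Dirichlet kernel. -/
noncomputable def dirichletKernel (n : ℕ) (θ : ℝ) : ℝ :=
  Real.sin (((n : ℝ) + 1 / 2) * θ) / Real.sin (θ / 2)

theorem stmt_11 (n : ℕ) (z : ℝ) (hz : 1 / 4 < z) :
    g n z = Real.sin ((n + 1) * Real.arctan (Real.sqrt (4 * z - 1))) /
        Real.sin (Real.arctan (Real.sqrt (4 * z - 1))) ∧
    g (2 * n) z = dirichletKernel n (2 * Real.arctan (Real.sqrt (4 * z - 1))) := by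
  have hz0 : (0:ℝ) < z := by linarith
  set x := Real.sqrt (4 * z - 1) with hx
  set θ := Real.arctan x with hθ
  have hx2 : x ^ 2 = 4 * z - 1 := Real.sq_sqrt (by linarith)
  have hxpos : 0 < x := Real.sqrt_pos.mpr (by linarith)
  have hszpos : 0 < Real.sqrt z := Real.sqrt_pos.mpr hz0
  have hsz2 : Real.sqrt z ^ 2 = z := Real.sq_sqrt hz0.le
  have h4z : Real.sqrt (1 + x ^ 2) = 2 * Real.sqrt z := by
    rw [show 1 + x ^ 2 = (2 * Real.sqrt z) ^ 2 by nlinarith]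
    exact Real.sqrt_sq (by positivity)
  have hcos : Real.cos θ = 1 / (2 * Real.sqrt z) := by
    rw [hθ, Real.cos_arctan, h4z]
  have hsin : Real.sin θ = x / (2 * Real.sqrt z) := by
    rw [hθ, Real.sin_arctan, h4z]
  have hsinpos : 0 < Real.sin θ := by
    rw [hsin]; positivity
  have hrec : ∀ m : ℕ, g (m + 2) z = g (m + 1) z / Real.sqrt z - g m z := by
    intro m
    simp only [g, G]
    rw [pow_succ, pow_succ]
    field_simp
    linear_combination (G m z) *
      Real.mul_self_sqrt hz0.le
  have key : ∀ m : ℕ, g m z * Real.sin θ = Real.sin ((m + 1) * θ) := by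
    intro m
    induction m using Nat.twoStepInduction with
    | zero => simp [g, G]
    | one =>
      have : g 1 z = 1 / Real.sqrt z := by simp [g, G]
      rw [this, show ((1:ℕ):ℝ) + 1 = 2 by norm_num,
        show (2:ℝ) * θ = θ + θ by ring, Real.sin_add, hcos]
      field_simp
      ring
    | more m ih1 ih2 =>
      rw [hrec m]
      have e1 : ((m + 2 : ℕ) + 1 : ℝ) * θ = ((m + 1 : ℕ) + 1 : ℝ) * θ + θ := by
        push_cast; ring
      have e2 : ((m : ℕ) + 1 : ℝ) * θ = ((m + 1 : ℕ) + 1 : ℝ) * θ - θ := by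
        push_cast; ring
      rw [e2, Real.sin_sub, ← ih2, hcos] at ih1
      rw [e1, Real.sin_add, ← ih2, hcos]
      field_simp at ih1 ⊢
      linear_combination (-1) * ih1
  have hsne : Real.sin θ ≠ 0 := ne_of_gt hsinpos
  have h1 : g n z = Real.sin ((n + 1) * θ) / Real.sin θ :=
    (eq_div_iff hsne).mpr (key n)
  refine ⟨h1, ?_⟩
  have h2 : g (2 * n) z = Real.sin (((2 * n : ℕ) + 1) * θ) / Real.sin θ :=
    (eq_div_iff hsne).mpr (key (2 * n))
  rw [h2, dirichletKernel]
  congr 1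
  · push_cast; ring_nf
  · rw [show 2 * θ / 2 = θ by ring]
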